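/- Let 0 < σ₁ < σ₂, N ≥ 2, and let f_j (j=1,2) be C² solutions of f_j'' + ((N-1)/r) f_j' - (1/σ_j) f_j = 0 on (0,∞). Suppose f₁(ρ) = f₂(ρ) and σ₁ f₁'(ρ) = σ₂ f₂'(ρ) < 0 for some ρ > 0. If there exists ℓ ∈ (ρ,∞) with f₁(ℓ) = f₂(ℓ) and f₁(r) < f₂(r) for all r ∈ (ρ,ℓ), then f₁'(ℓ) > 0 and f₂'(ℓ) > 0. -/

import Mathlib

open Set

lemma key_hasDerivAt (σ : ℝ) (hσ : 0 < σ) (N : ℕ) (hN : 2 ≤ N) (f : ℝ → ℝ)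
    (hreg : ContDiffOn ℝ 2 f (Set.Ioi 0))
    (hode : ∀ r ∈ Set.Ioi (0 : ℝ),
      deriv (deriv f) r + ((N : ℝ) - 1) / r * deriv f r - (1 / σ) * f r = 0)
    (r : ℝ) (hr : 0 < r) :
    HasDerivAt (fun x => σ * (x ^ (N - 1) * deriv f x)) (r ^ (N - 1) * f r) r := by
  have hf : DifferentiableAt ℝ f r :=
    (hreg.differentiableOn (by norm_num)).differentiableAt (isOpen_Ioi.mem_nhds hr)
  have hdf : ContDiffOn ℝ 1 (deriv f) (Set.Ioi 0) :=
    hreg.deriv_of_isOpen isOpen_Ioi (by norm_num)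
  have hdf' : DifferentiableAt ℝ (deriv f) r :=
    (hdf.differentiableOn (by norm_num)).differentiableAt (isOpen_Ioi.mem_nhds hr)
  have h1 : HasDerivAt (fun x : ℝ => x ^ (N - 1)) ((↑(N - 1) : ℝ) * r ^ (N - 1 - 1)) r :=
    hasDerivAt_pow (N - 1) r
  have h2 := (h1.mul hdf'.hasDerivAt).const_mul σ
  refine h2.congr_deriv ?_
  have hode' := hode r hr
  have hN1 : ((N - 1 : ℕ) : ℝ) = (N : ℝ) - 1 := by
    push_cast [Nat.cast_sub (by omega : 1 ≤ N)]; ring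
  have hpow : r ^ (N - 1) = r * r ^ (N - 1 - 1) := by
    rw [← pow_succ']
    congr 1
    omega
  have hdd : deriv (deriv f) r = (1 / σ) * f r - ((N : ℝ) - 1) / r * deriv f r := by
    linarith
  rw [hdd, hN1, hpow]
  field_simp
  ring

theorem stmt_6 (σ₁ σ₂ : ℝ) (hσ₁ : 0 < σ₁) (hσ₁₂ : σ₁ < σ₂) (N : ℕ) (hN : 2 ≤ N)
    (f₁ f₂ : ℝ → ℝ)
    (hreg₁ : ContDiffOn ℝ 2 f₁ (Set.Ioi 0)) (hreg₂ : ContDiffOn ℝ 2 f₂ (Set.Ioi 0))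
    (hode₁ : ∀ r ∈ Set.Ioi (0 : ℝ),
      deriv (deriv f₁) r + ((N : ℝ) - 1) / r * deriv f₁ r - (1 / σ₁) * f₁ r = 0)
    (hode₂ : ∀ r ∈ Set.Ioi (0 : ℝ),
      deriv (deriv f₂) r + ((N : ℝ) - 1) / r * deriv f₂ r - (1 / σ₂) * f₂ r = 0)
    (ρ : ℝ) (hρ : 0 < ρ)
    (hval : f₁ ρ = f₂ ρ)
    (hder : σ₁ * deriv f₁ ρ = σ₂ * deriv f₂ ρ) (hneg : σ₂ * deriv f₂ ρ < 0)
    (ℓ : ℝ) (hℓ : ρ < ℓ)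
    (hvl : f₁ ℓ = f₂ ℓ) (hlt : ∀ r ∈ Set.Ioo ρ ℓ, f₁ r < f₂ r) :
    0 < deriv f₁ ℓ ∧ 0 < deriv f₂ ℓ := by
  have hσ₂ : 0 < σ₂ := lt_trans hσ₁ hσ₁₂
  set W : ℝ → ℝ := fun x =>
    σ₁ * (x ^ (N - 1) * deriv f₁ x) - σ₂ * (x ^ (N - 1) * deriv f₂ x) with hWdef
  have hWd : ∀ r ∈ Set.Ioi (0 : ℝ),
      HasDerivAt W (r ^ (N - 1) * (f₁ r - f₂ r)) r := by
    intro r hr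
    have h1 := key_hasDerivAt σ₁ hσ₁ N hN f₁ hreg₁ hode₁ r hr
    have h2 := key_hasDerivAt σ₂ hσ₂ N hN f₂ hreg₂ hode₂ r hr
    have := h1.sub h2
    refine this.congr_deriv ?_
    ring
  -- W is strictly decreasing on [ρ, ℓ]
  have hIcc : Set.Icc ρ ℓ ⊆ Set.Ioi (0 : ℝ) := fun x hx => lt_of_lt_of_le hρ hx.1
  have hWanti : StrictAntiOn W (Set.Icc ρ ℓ) := by
    apply strictAntiOn_of_deriv_neg (convex_Icc ρ ℓ)
    · intro x hx
      exact (hWd x (hIcc hx)).continuousAt.continuousWithinAt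
    · intro x hx
      rw [interior_Icc] at hx
      rw [(hWd x (hIcc (Set.mem_Icc_of_Ioo hx))).deriv]
      have h1 : (0:ℝ) < x := lt_trans hρ hx.1
      have h2 : f₁ x < f₂ x := hlt x hx
      have := pow_pos h1 (N - 1)
      nlinarith
  have hWρ : W ρ = 0 := by
    simp only [hWdef]
    linear_combination (ρ ^ (N - 1)) * hder
  have hWℓ : W ℓ < 0 := by
    have := hWanti (Set.left_mem_Icc.2 hℓ.le) (Set.right_mem_Icc.2 hℓ.le) hℓ
    rwa [hWρ] at this
  have hℓpos : (0:ℝ) < ℓ := lt_trans hρ hℓ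
  have hpowℓ : (0:ℝ) < ℓ ^ (N - 1) := pow_pos hℓpos _
  have hkey : σ₁ * deriv f₁ ℓ < σ₂ * deriv f₂ ℓ := by
    simp only [hWdef] at hWℓ
    nlinarith
  -- deriv f₂ ℓ ≤ deriv f₁ ℓ via slope argument
  have hf₁' : HasDerivAt f₁ (deriv f₁ ℓ) ℓ :=
    ((hreg₁.differentiableOn (by norm_num)).differentiableAt
      (isOpen_Ioi.mem_nhds hℓpos)).hasDerivAt
  have hf₂' : HasDerivAt f₂ (deriv f₂ ℓ) ℓ :=
    ((hreg₂.differentiableOn (by norm_num)).differentiableAt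
      (isOpen_Ioi.mem_nhds hℓpos)).hasDerivAt
  have hg : HasDerivAt (fun x => f₂ x - f₁ x) (deriv f₂ ℓ - deriv f₁ ℓ) ℓ := hf₂'.sub hf₁'
  have hslope : Filter.Tendsto (slope (fun x => f₂ x - f₁ x) ℓ) (nhdsWithin ℓ (Set.Iio ℓ))
      (nhds (deriv f₂ ℓ - deriv f₁ ℓ)) := by
    rw [hasDerivAt_iff_tendsto_slope] at hg
    exact hg.mono_left (nhdsWithin_mono ℓ (fun x hx => ne_of_lt hx))
  have hle : deriv f₂ ℓ - deriv f₁ ℓ ≤ 0 := by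
    refine le_of_tendsto hslope ?_
    filter_upwards [Ioo_mem_nhdsLT_of_mem (Set.mem_Ioc.2 ⟨hℓ, le_refl ℓ⟩)] with x hx
    have h1 : f₁ x < f₂ x := hlt x hx
    have h2 : x - ℓ < 0 := sub_neg.2 hx.2
    rw [slope_def_field]
    rw [div_nonpos_iff]
    left
    constructor
    · rw [hvl]; linarith
    · linarith
  constructor <;> nlinarith
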